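/- Let γ, b be real numbers with 0 < γ < 1 and b ≥ 0. Set s = √(1 - γ² + b + b²), α = (3 - 4γ²)/(1 + 2b + √(3 - 4γ² + (1 + 2b)²)), a = (1 + α)/(1 - α), and c = 1/(1 + T₂(a)) where T₂(x) = 2x² - 1. Then α = 2s - 2b - 1, s > b, 1 - α ≠ 0, and the polynomial coefficients simplify as 8ac/(1 - α) = 2/(s - b) and -8c/(1 - α)² = -1/(s - b)². -/

import Mathlib

/-- Simplification of the coefficients of the degree-one AMLI stabilization
polynomial built from the Chebyshev polynomial T₂(x) = 2x² - 1: with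
s = √(1 - γ² + b + b²), α = (3 - 4γ²)/(1 + 2b + √(3 - 4γ² + (1+2b)²)),
a = (1+α)/(1-α), c = 1/(1 + T₂(a)), we have α = 2s - 2b - 1, s > b,
1 - α ≠ 0, 8ac/(1-α) = 2/(s-b) and -8c/(1-α)² = -1/(s-b)². -/
theorem amli_poly_coeffs (γ b s α a c : ℝ)
    (hγ0 : 0 < γ) (hγ1 : γ < 1) (hb : 0 ≤ b)
    (hs : s = Real.sqrt (1 - γ^2 + b + b^2))
    (hα : α = (3 - 4*γ^2) / (1 + 2*b + Real.sqrt (3 - 4*γ^2 + (1 + 2*b)^2)))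
    (ha : a = (1 + α) / (1 - α))
    (hc : c = 1 / (1 + (2*a^2 - 1))) :
    α = 2*s - 2*b - 1 ∧ b < s ∧ 1 - α ≠ 0 ∧
    8*a*c / (1 - α) = 2 / (s - b) ∧
    -8*c / (1 - α)^2 = -1 / (s - b)^2 := by
  have hu : (0:ℝ) < 1 - γ^2 + b + b^2 := by nlinarith
  have hs0 : 0 < s := hs ▸ Real.sqrt_pos.mpr hu
  have hs2 : s^2 = 1 - γ^2 + b + b^2 := by rw [hs, Real.sq_sqrt hu.le]
  have hrt : Real.sqrt (3 - 4*γ^2 + (1 + 2*b)^2) = 2*s := by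
    rw [show 3 - 4*γ^2 + (1 + 2*b)^2 = (2*s)^2 by nlinarith, Real.sqrt_sq (by linarith)]
  have hα' : α = 2*s - 2*b - 1 := by
    rw [hα, hrt]
    rw [div_eq_iff (by positivity : (1 + 2*b + 2*s) ≠ 0)]
    nlinarith
  have hbs : b < s := by nlinarith
  have hs1b : s < 1 + b := by nlinarith
  have h1α : 1 - α = 2*(1 + b - s) := by rw [hα']; ring
  have hq : (0:ℝ) < 1 + b - s := by linarith
  have hp : (0:ℝ) < s - b := by linarith
  have h1α0 : 1 - α ≠ 0 := by rw [h1α]; positivity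
  have ha' : a = (s - b)/(1 + b - s) := by
    rw [ha, hα']
    rw [show 1+(2*s-2*b-1) = 2*(s-b) by ring, show 1-(2*s-2*b-1) = 2*(1+b-s) by ring,
      mul_div_mul_left _ _ (two_ne_zero)]
  have hc' : c = (1 + b - s)^2/(2*(s - b)^2) := by
    rw [hc, ha']
    field_simp
    ring
  refine ⟨hα', hbs, h1α0, ?_, ?_⟩
  · rw [ha', hc', h1α]
    field_simp
    ring
  · rw [hc', h1α]
    field_simp
    ring
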